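/- For every natural number x, 1 - G(x) = (1/μ)·[(x+2)(1 - F(x+1)) + ∑_{j=x+2}^∞ (1 - F(j))], where the series on the right converges. -/

import Mathlib

open scoped BigOperators

open scoped ENNReal

lemma key_tsum (g : ℕ → ℝ≥0∞) (b : ℕ) :
    ∑' j : ℕ, ∑' k : ℕ, g (b + j + k) = ∑' m : ℕ, ((m + 1 : ℕ) : ℝ≥0∞) * g (b + m) := by
  have h1 : ∀ j : ℕ, ∑' k : ℕ, g (b + j + k)
      = ∑' m : ℕ, (if j ≤ m then g (b + m) else 0) := by
    intro j
    have hinj : Function.Injective (fun k : ℕ => j + k) := by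
      intro a c h; simpa using h
    have := Function.Injective.tsum_eq hinj
      (f := fun m => if j ≤ m then g (b + m) else 0) ?_
    · rw [← this]
      apply tsum_congr; intro k
      simp [Nat.le_add_right, Nat.add_assoc]
    · intro m hm
      simp only [Function.mem_support] at hm
      by_cases h : j ≤ m
      · exact ⟨m - j, show j + (m - j) = m by omega⟩
      · simp [h] at hm
  calc ∑' j : ℕ, ∑' k : ℕ, g (b + j + k)
      = ∑' j : ℕ, ∑' m : ℕ, (if j ≤ m then g (b + m) else 0) := tsum_congr h1
    _ = ∑' m : ℕ, ∑' j : ℕ, (if j ≤ m then g (b + m) else 0) := ENNReal.tsum_comm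
    _ = ∑' m : ℕ, ((m + 1 : ℕ) : ℝ≥0∞) * g (b + m) := by
        apply tsum_congr; intro m
        rw [tsum_eq_sum (s := Finset.range (m + 1)) (fun j hj => by
          simp only [Finset.mem_range] at hj
          simp [show ¬ j ≤ m by omega])]
        have hc : ∀ j ∈ Finset.range (m + 1), (if j ≤ m then g (b + m) else 0) = g (b + m) := by
          intro j hj; simp only [Finset.mem_range] at hj; simp [show j ≤ m by omega]
        rw [Finset.sum_congr rfl hc, Finset.sum_const, Finset.card_range, nsmul_eq_mul]

theorem stmt_1
    (f : ℕ → ℝ)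
    (hf_nonneg : ∀ j, 0 ≤ f j) (hf0 : f 0 = 0)
    (hf_sum : ∑' j : ℕ, f j = 1)
    (hμ_sum : Summable fun j : ℕ => (j : ℝ) * f j)
    (μ : ℝ) (hμ : μ = ∑' j : ℕ, (j : ℝ) * f j) (hμ_pos : 0 < μ)
    (F G : ℕ → ℝ)
    (hF : ∀ n, F n = ∑ j ∈ Finset.Icc 1 n, f j)
    (hG : ∀ n, G n = ∑ j ∈ Finset.range (n + 1), ((j : ℝ) + 1) * f (j + 1) / μ)
    (x : ℕ) :
    Summable (fun j : ℕ => 1 - F (x + 2 + j)) ∧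
    1 - G x = (1 / μ) *
      (((x : ℝ) + 2) * (1 - F (x + 1)) + ∑' j : ℕ, (1 - F (x + 2 + j))) := by
  -- f is summable
  have hf_summable : Summable f := by
    by_contra h
    rw [tsum_eq_zero_of_not_summable h] at hf_sum
    norm_num at hf_sum
  -- F in terms of range
  have hFr : ∀ n, F n = ∑ j ∈ Finset.range (n + 1), f j := by
    intro n
    have hins : Finset.range (n + 1) = insert 0 (Finset.Icc 1 n) := by
      ext j; simp [Nat.lt_succ]; omega
    rw [hF, hins, Finset.sum_insert (by simp), hf0, zero_add]
  -- tails of f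
  have htailS : ∀ n : ℕ, Summable (fun k => f (n + k)) := by
    intro n
    have := hf_summable.comp_injective (i := fun k : ℕ => n + k)
      (by intro a c h; simpa using h)
    exact this
  have hFtail : ∀ n, 1 - F n = ∑' k : ℕ, f (n + 1 + k) := by
    intro n
    have h := Summable.sum_add_tsum_nat_add (f := f) (n + 1) hf_summable
    rw [hf_sum] at h
    rw [hFr]
    have : ∑' k : ℕ, f (k + (n + 1)) = ∑' k : ℕ, f (n + 1 + k) :=
      tsum_congr (fun k => by ring_nf)
    linarith [this ▸ h]
  -- ENNReal version of f
  set g : ℕ → ℝ≥0∞ := fun n => ENNReal.ofReal (f n) with hg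
  have hgtail : ∀ n : ℕ, (∑' k : ℕ, g (n + 1 + k)) = ENNReal.ofReal (1 - F n) := by
    intro n
    rw [hFtail n, ENNReal.ofReal_tsum_of_nonneg (fun k => hf_nonneg _) (htailS (n + 1))]
  -- total weighted sum in ENNReal
  have hμE : ∑' n : ℕ, ((n : ℕ) : ℝ≥0∞) * g n = ENNReal.ofReal μ := by
    rw [hμ, ENNReal.ofReal_tsum_of_nonneg (fun n => mul_nonneg (by positivity) (hf_nonneg n)) hμ_sum]
    apply tsum_congr; intro n
    rw [ENNReal.ofReal_mul (by positivity), ENNReal.ofReal_natCast]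
  -- finiteness of shifted weighted tails
  have hfin : ∀ b : ℕ, 1 ≤ b → ∑' m : ℕ, ((m + 1 : ℕ) : ℝ≥0∞) * g (b + m) ≠ ⊤ := by
    intro b hb
    have hle : ∑' m : ℕ, ((m + 1 : ℕ) : ℝ≥0∞) * g (b + m)
        ≤ ∑' m : ℕ, (((b + m : ℕ)) : ℝ≥0∞) * g (b + m) := by
      apply ENNReal.tsum_le_tsum
      intro m
      exact mul_le_mul_left (Nat.cast_le.mpr (by omega)) _
    have hle2 : ∑' m : ℕ, (((b + m : ℕ)) : ℝ≥0∞) * g (b + m)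
        ≤ ∑' n : ℕ, ((n : ℕ) : ℝ≥0∞) * g n :=
      ENNReal.tsum_comp_le_tsum_of_injective (f := fun m : ℕ => b + m)
        (by intro a c h; simpa using h) (fun n => ((n : ℕ) : ℝ≥0∞) * g n)
    rw [hμE] at hle2
    exact ne_top_of_le_ne_top ENNReal.ofReal_ne_top (hle.trans hle2)
  -- the double sum identity at b = x + 3
  have hkey : ∑' j : ℕ, ∑' k : ℕ, g (x + 3 + j + k)
      = ∑' m : ℕ, ((m + 1 : ℕ) : ℝ≥0∞) * g (x + 3 + m) := key_tsum g (x + 3)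
  have hkey_fin : ∑' m : ℕ, ((m + 1 : ℕ) : ℝ≥0∞) * g (x + 3 + m) ≠ ⊤ := hfin (x + 3) (by omega)
  -- terms of the double sum
  have hA : ∀ j : ℕ, (∑' k : ℕ, g (x + 3 + j + k)) = ENNReal.ofReal (1 - F (x + 2 + j)) := by
    intro j
    have := hgtail (x + 2 + j)
    rw [← this]
    apply tsum_congr; intro k; congr 1; omega
  have hA_ne_top : ∀ j : ℕ, (∑' k : ℕ, g (x + 3 + j + k)) ≠ ⊤ := by
    intro j; rw [hA j]; exact ENNReal.ofReal_ne_top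
  have hsum_ne_top : ∑' j : ℕ, ∑' k : ℕ, g (x + 3 + j + k) ≠ ⊤ := by
    rw [hkey]; exact hkey_fin
  -- summability claim
  have htail_nonneg : ∀ n, 0 ≤ 1 - F n := by
    intro n
    rw [hFtail n]
    exact tsum_nonneg (fun k => hf_nonneg _)
  have hsummable : Summable (fun j : ℕ => 1 - F (x + 2 + j)) := by
    have := ENNReal.summable_toReal hsum_ne_top
    apply this.congr
    intro j
    rw [hA j, ENNReal.toReal_ofReal (htail_nonneg _)]
  refine ⟨hsummable, ?_⟩
  -- compute the sum ∑' j, (1 - F (x+2+j)) = ∑' m, m * f (x+2+m)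
  have hS2' : Summable (fun m : ℕ => ((x + 2 + m : ℕ) : ℝ) * f (x + 2 + m)) := by
    have := hμ_sum.comp_injective (i := fun m : ℕ => x + 2 + m)
      (by intro a c h; simpa using h)
    exact this
  have hS2 : Summable (fun m : ℕ => (m : ℝ) * f (x + 2 + m)) := by
    apply Summable.of_nonneg_of_le (fun m => mul_nonneg (by positivity) (hf_nonneg _)) _ hS2'
    intro m
    apply mul_le_mul_of_nonneg_right _ (hf_nonneg _)
    exact_mod_cast (show m ≤ x + 2 + m by omega)
  have hD : ∑' j : ℕ, (1 - F (x + 2 + j)) = ∑' m : ℕ, (m : ℝ) * f (x + 2 + m) := by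
    have h1 : ∑' j : ℕ, (1 - F (x + 2 + j))
        = (∑' j : ℕ, ∑' k : ℕ, g (x + 3 + j + k)).toReal := by
      rw [ENNReal.tsum_toReal_eq hA_ne_top]
      apply tsum_congr; intro j
      rw [hA j, ENNReal.toReal_ofReal (htail_nonneg _)]
    rw [h1, hkey, ENNReal.tsum_toReal_eq
      (fun m => ENNReal.mul_ne_top (by simp) ENNReal.ofReal_ne_top)]
    have h2 : ∀ m : ℕ, (((m + 1 : ℕ) : ℝ≥0∞) * g (x + 3 + m)).toReal
        = ((m + 1 : ℕ) : ℝ) * f (x + 3 + m) := by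
      intro m
      rw [ENNReal.toReal_mul, ENNReal.toReal_natCast, ENNReal.toReal_ofReal (hf_nonneg _)]
    rw [tsum_congr h2]
    -- ∑' m, (m+1) * f (x+3+m) = ∑' m, m * f (x+2+m)
    have h3 := Summable.tsum_eq_zero_add hS2
    simp only [Nat.cast_zero, zero_mul, zero_add] at h3
    rw [h3]
    apply tsum_congr; intro m
    push_cast
    congr 2
    omega
  -- compute 1 - G x
  set h : ℕ → ℝ := fun j => ((j : ℝ) + 1) * f (j + 1) / μ with hh
  have hh_sum0 : Summable (fun j : ℕ => ((j : ℝ) + 1) * f (j + 1)) := by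
    have := hμ_sum.comp_injective (i := fun j : ℕ => j + 1)
      (by intro a c h; simpa using h)
    apply this.congr
    intro j
    simp only [Function.comp]
    push_cast
    try ring
  have hh_sum : Summable h := hh_sum0.div_const μ
  have hh_tsum0 : ∑' j : ℕ, ((j : ℝ) + 1) * f (j + 1) = μ := by
    have h3 := Summable.tsum_eq_zero_add hμ_sum
    simp only [Nat.cast_zero, zero_mul, zero_add] at h3
    rw [hμ, h3]
    apply tsum_congr; intro j; push_cast; ring
  have hh_tsum : ∑' j : ℕ, h j = 1 := by
    rw [hh]
    simp only
    rw [tsum_div_const, hh_tsum0, div_self hμ_pos.ne']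
  have hGtail : 1 - G x = ∑' j : ℕ, h (j + (x + 1)) := by
    have := Summable.sum_add_tsum_nat_add (f := h) (x + 1) hh_sum
    rw [hh_tsum] at this
    rw [hG]
    have heq : G x = ∑ j ∈ Finset.range (x + 1), h j := by rw [hG]
    linarith [this]
  -- rewrite LHS tail
  have hLHS : 1 - G x = ∑' j : ℕ, ((x + 2 + j : ℕ) : ℝ) * f (x + 2 + j) / μ := by
    rw [hGtail]
    apply tsum_congr; intro j
    rw [hh]
    simp only
    have hidx : j + (x + 1) + 1 = x + 2 + j := by omega
    rw [hidx]
    congr 1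
    push_cast
    try ring
  rw [hLHS, hD]
  -- RHS manipulation
  have hF1 : 1 - F (x + 1) = ∑' k : ℕ, f (x + 2 + k) := by
    rw [hFtail (x + 1)]
  rw [hF1]
  have hconst : ((x : ℝ) + 2) * ∑' k : ℕ, f (x + 2 + k) = ∑' k : ℕ, ((x : ℝ) + 2) * f (x + 2 + k) :=
    (tsum_mul_left).symm
  rw [hconst]
  have hSsum1 : Summable (fun k : ℕ => ((x : ℝ) + 2) * f (x + 2 + k)) := by
    apply Summable.mul_left
    exact (htailS (x + 2)).congr (fun k => by ring_nf)
  rw [← Summable.tsum_add hSsum1 hS2]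
  rw [← tsum_mul_left]
  apply tsum_congr; intro m
  push_cast
  field_simp
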